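/- For every N ≥ 1, the integral over the standard simplex { y ∈ ℝ^{N−1} : y_i ≥ 0 for all i, and y_1 + ⋯ + y_{N−1} ≤ 1 } of the squared Vandermonde determinant ∏_{1 ≤ i < j ≤ N} (x_i − x_j)², where x_i = y_i for 1 ≤ i ≤ N−1 and x_N = 1 − (y_1 + ⋯ + y_{N−1}), equals N! · (∏_{k=1}^{N} (k−1)!)² / (N² − 1)!. -/

import Mathlib

open MeasureTheory

/-- The `N` values `x_1, …, x_N` determined by `y ∈ ℝ^{N-1}`:
`x_i = y_i` for `1 ≤ i ≤ N-1` and `x_N = 1 - (y_1 + ⋯ + y_{N-1})`. -/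
noncomputable def xOf {N : ℕ} (y : Fin (N - 1) → ℝ) (i : Fin N) : ℝ :=
  if h : (i : ℕ) < N - 1 then y ⟨i, h⟩ else 1 - ∑ j, y j

open intervalIntegral


lemma beta_nat (a b : ℕ) :
    ∫ x in (0:ℝ)..1, x ^ a * (1 - x) ^ b
      = (a.factorial * b.factorial : ℝ) / (a + b + 1).factorial := by
  induction b generalizing a with
  | zero =>
    simp only [pow_zero, mul_one, integral_pow, Nat.add_zero, Nat.factorial_succ,
      Nat.factorial_zero]
    have ha : ((a:ℝ)+1) ≠ 0 := by positivity
    have ha' : ((a.factorial : ℝ)) ≠ 0 := by positivity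
    push_cast
    field_simp
    simp
  | succ b ih =>
    have key : ∫ x in (0:ℝ)..1, x ^ a * (1 - x) ^ (b + 1)
        = ((b:ℝ)+1)/((a:ℝ)+1) * ∫ x in (0:ℝ)..1, x ^ (a+1) * (1 - x) ^ b := by
      have hu : ∀ x ∈ Set.uIcc (0:ℝ) 1, HasDerivAt (fun x : ℝ => (1 - x)^(b+1))
          (-((b:ℝ)+1) * (1-x)^b) x := by
        intro x _
        have h1 : HasDerivAt (fun x : ℝ => 1 - x) (-1) x := by
          simpa using ((hasDerivAt_id x).const_sub 1)
        have := h1.pow (b+1)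
        refine this.congr_deriv ?_
        push_cast
        ring
      have hv : ∀ x ∈ Set.uIcc (0:ℝ) 1, HasDerivAt (fun x : ℝ => x^(a+1)/((a:ℝ)+1))
          (x ^ a) x := by
        intro x _
        have := (hasDerivAt_pow (a+1) x).div_const ((a:ℝ)+1)
        refine this.congr_deriv ?_
        have : ((a:ℝ)+1) ≠ 0 := by positivity
        field_simp
        push_cast
        ring
      have h0 := integral_mul_deriv_eq_deriv_mul hu hv
        (by apply Continuous.intervalIntegrable; continuity)
        (by apply Continuous.intervalIntegrable; continuity)
      calc ∫ x in (0:ℝ)..1, x ^ a * (1 - x) ^ (b+1)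
          = ∫ x in (0:ℝ)..1, (1 - x) ^ (b+1) * x ^ a :=
            intervalIntegral.integral_congr (fun x _ => mul_comm _ _)
        _ = (1-(1:ℝ))^(b+1) * (1^(a+1)/((a:ℝ)+1)) - (1-(0:ℝ))^(b+1) * (0^(a+1)/((a:ℝ)+1))
              - ∫ x in (0:ℝ)..1, (-((b:ℝ)+1) * (1-x)^b) * (x^(a+1)/((a:ℝ)+1)) := h0
        _ = ∫ x in (0:ℝ)..1, ((b:ℝ)+1)/((a:ℝ)+1) * (x^(a+1) * (1-x)^b) := by
            rw [show ∀ X : ℝ, (1-(1:ℝ))^(b+1) * (1^(a+1)/((a:ℝ)+1))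
              - (1-(0:ℝ))^(b+1) * ((0:ℝ)^(a+1)/((a:ℝ)+1)) - X = -X from by
                intro X; rw [sub_self, zero_pow (Nat.succ_ne_zero b), zero_pow
                  (Nat.succ_ne_zero a)]; ring]
            rw [← intervalIntegral.integral_neg]
            exact intervalIntegral.integral_congr (fun x _ => by ring)
        _ = ((b:ℝ)+1)/((a:ℝ)+1) * ∫ x in (0:ℝ)..1, x^(a+1) * (1-x)^b :=
            intervalIntegral.integral_const_mul _ _
    rw [key, ih (a+1)]
    have e1 : a + (b + 1) + 1 = (a + 1 + b + 1) := by omega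
    rw [e1, show (a+1).factorial = (a+1) * a.factorial from Nat.factorial_succ a,
      Nat.factorial_succ b]
    have h1 : ((a:ℝ)+1) ≠ 0 := by positivity
    have h2 : ((a + 1 + b + 1).factorial : ℝ) ≠ 0 := by positivity
    push_cast
    field_simp

lemma beta_nat_scaled (a b : ℕ) {s : ℝ} (hs : 0 ≤ s) :
    ∫ x in (0:ℝ)..s, x ^ a * (s - x) ^ b
      = s ^ (a + b + 1) * (a.factorial * b.factorial : ℝ) / (a + b + 1).factorial := by
  rcases eq_or_lt_of_le hs with h | h
  · rw [← h]
    simp [zero_pow (Nat.succ_ne_zero (a+b))]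
  · have hne : s ≠ 0 := ne_of_gt h
    have := intervalIntegral.integral_comp_mul_left (a := 0) (b := 1)
      (fun x : ℝ => x ^ a * (s - x) ^ b) hne
    simp only [mul_zero, mul_one] at this
    have e1 : ∀ x : ℝ, (s * x) ^ a * (s - s * x) ^ b = s^(a+b) * (x ^ a * (1 - x)^b) := by
      intro x
      have : s - s * x = s * (1 - x) := by ring
      rw [this, mul_pow, mul_pow]
      ring
    rw [intervalIntegral.integral_congr (g := fun x : ℝ => s^(a+b) * (x ^ a * (1-x)^b))
      (fun x _ => e1 x)] at this
    rw [intervalIntegral.integral_const_mul, beta_nat, smul_eq_mul,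
      eq_inv_mul_iff_mul_eq₀ hne] at this
    rw [← this, pow_succ]
    ring

def simplexSet (n : ℕ) (s : ℝ) : Set (Fin n → ℝ) := {y | (∀ i, 0 ≤ y i) ∧ ∑ i, y i ≤ s}

lemma simplexSet_eq (n : ℕ) (s : ℝ) : simplexSet n s
    = (⋂ i, {y : Fin n → ℝ | 0 ≤ y i}) ∩ {y : Fin n → ℝ | ∑ i, y i ≤ s} := by
  ext y; simp [simplexSet, Set.mem_iInter]

lemma simplexSet_measurable (n : ℕ) (s : ℝ) : MeasurableSet (simplexSet n s) := by
  rw [simplexSet_eq]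
  apply MeasurableSet.inter
  · exact MeasurableSet.iInter fun i =>
      measurableSet_le measurable_const (measurable_pi_apply i)
  · exact measurableSet_le (Finset.measurable_sum _ fun i _ => measurable_pi_apply i)
      measurable_const

lemma simplexSet_isCompact (n : ℕ) {s : ℝ} (hs : 0 ≤ s) : IsCompact (simplexSet n s) := by
  have hclosed : IsClosed (simplexSet n s) := by
    rw [simplexSet_eq]
    apply IsClosed.inter
    · exact isClosed_iInter fun i =>
        isClosed_le continuous_const (continuous_apply i)
    · exact isClosed_le (continuous_finset_sum _ fun i _ => continuous_apply i)
        continuous_const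
  have hsub : simplexSet n s ⊆ Set.Icc (fun _ => 0) (fun _ => s) := by
    rintro y ⟨h0, h1⟩
    constructor
    · intro i; exact h0 i
    · intro i
      calc y i ≤ ∑ j, y j := Finset.single_le_sum (fun j _ => h0 j) (Finset.mem_univ i)
        _ ≤ s := h1
  exact IsCompact.of_isClosed_subset isCompact_Icc hclosed hsub

lemma simplexSet_empty (n : ℕ) {s : ℝ} (hs : s < 0) : simplexSet n s = ∅ := by
  ext y
  simp only [simplexSet, Set.mem_setOf_eq, Set.mem_empty_iff_false, iff_false, not_and]
  intro h0 h1
  have : (0:ℝ) ≤ ∑ i, y i := Finset.sum_nonneg fun i _ => h0 i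
  linarith

lemma dirichlet (n : ℕ) : ∀ (a : Fin n → ℕ) (b : ℕ) (s : ℝ), 0 ≤ s →
    (∫ y in simplexSet n s, (∏ i, y i ^ a i) * (s - ∑ i, y i) ^ b)
      = s ^ (n + ∑ i, a i + b) * ((∏ i, ((a i).factorial : ℝ)) * b.factorial)
          / ((n + ∑ i, a i + b).factorial) := by
  induction n with
  | zero =>
    intro a b s hs
    have hset : simplexSet 0 s = Set.univ := by
      ext y
      simp [simplexSet, hs]
    rw [hset, setIntegral_univ]
    have huniv : (volume : Measure (Fin 0 → ℝ)) Set.univ = 1 := by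
      simp [volume_pi, Measure.pi_univ]
    simp only [Fin.sum_univ_zero, Fin.prod_univ_zero, sub_zero, one_mul]
    rw [MeasureTheory.integral_const, measureReal_def, huniv]
    have hb : ((b.factorial : ℝ)) ≠ 0 := by positivity
    simp only [ENNReal.toReal_one, one_smul, Nat.zero_add, Nat.add_zero, zero_add]
    rw [mul_div_assoc, div_self hb, mul_one]
  | succ n ih =>
    intro a b s hs
    set A' : ℕ := ∑ j : Fin n, a j.succ with hA'
    set M : ℕ := n + A' + b with hM
    have hMfac : ((M.factorial : ℝ)) ≠ 0 := by positivity
    set C : ℝ := ((∏ j : Fin n, ((a j.succ).factorial : ℝ)) * b.factorial) / M.factorial with hC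
    set f : (Fin (n+1) → ℝ) → ℝ := fun y => (∏ i, y i ^ a i) * (s - ∑ i, y i) ^ b with hf
    have hfc : Continuous f := by
      apply Continuous.mul
      · exact continuous_finset_prod _ fun i _ => (continuous_apply i).pow _
      · exact ((continuous_const.sub (continuous_finset_sum _ fun i _ =>
          continuous_apply i)).pow _)
    set F : (Fin (n+1) → ℝ) → ℝ := (simplexSet (n+1) s).indicator f with hF
    have hFint : Integrable F := by
      rw [hF, integrable_indicator_iff (simplexSet_measurable _ _)]
      exact hfc.continuousOn.integrableOn_compact (simplexSet_isCompact _ hs)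
    set e := MeasurableEquiv.piFinSuccAbove (fun _ : Fin (n+1) => ℝ) 0 with he
    have hmp := measurePreserving_piFinSuccAbove (fun _ : Fin (n+1) => (volume : Measure ℝ)) 0
    set ν : Measure (ℝ × (Fin n → ℝ)) :=
      (volume : Measure ℝ).prod (Measure.pi fun _ : Fin n => (volume : Measure ℝ)) with hν
    -- pointwise description of F ∘ e.symm
    have hesymm : ∀ (t : ℝ) (z : Fin n → ℝ), e.symm (t, z) = Fin.cons t z := by
      intro t z
      rw [he]
      simp [MeasurableEquiv.piFinSuccAbove_symm_apply]
      rfl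
    have hy0 : ∀ (t : ℝ) (z : Fin n → ℝ), (e.symm (t, z)) 0 = t := by
      intro t z
      rw [hesymm]
      exact Fin.cons_zero (α := fun _ : Fin (n+1) => ℝ) t z
    have hys : ∀ (t : ℝ) (z : Fin n → ℝ) (j : Fin n), (e.symm (t, z)) j.succ = z j := by
      intro t z j
      rw [hesymm]
      exact Fin.cons_succ (α := fun _ : Fin (n+1) => ℝ) t z j
    have hcomp : ∀ p : ℝ × (Fin n → ℝ),
        F (e.symm p)
          = if 0 ≤ p.1 then (simplexSet n (s - p.1)).indicator
              (fun z => p.1 ^ a 0 * ((∏ j, z j ^ a j.succ) * ((s - p.1) - ∑ j, z j) ^ b)) p.2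
            else 0 := by
      rintro ⟨t, z⟩
      have hsum : ∑ i, (e.symm (t, z)) i = t + ∑ j, z j := by
        rw [Fin.sum_univ_succ, hy0]
        exact congrArg _ (Finset.sum_congr rfl fun j _ => hys t z j)
      have hprod : ∏ i, (e.symm (t, z)) i ^ a i = t ^ a 0 * ∏ j, z j ^ a j.succ := by
        rw [Fin.prod_univ_succ, hy0]
        refine congrArg _ (Finset.prod_congr rfl fun j _ => by rw [hys])
      have hmem : e.symm (t, z) ∈ simplexSet (n+1) s
          ↔ (0 ≤ t ∧ z ∈ simplexSet n (s - t)) := by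
        simp only [simplexSet, Set.mem_setOf_eq, hsum, Fin.forall_fin_succ, hy0]
        constructor
        · rintro ⟨⟨h0, h1⟩, h2⟩
          exact ⟨h0, fun j => by rw [← hys t z j]; exact h1 j, by linarith⟩
        · rintro ⟨h0, h1, h2⟩
          exact ⟨⟨h0, fun j => by rw [hys t z j]; exact h1 j⟩, by linarith⟩
      by_cases hin : e.symm (t, z) ∈ simplexSet (n+1) s
      · obtain ⟨h0, hz⟩ := hmem.mp hin
        rw [hF, Set.indicator_of_mem hin, if_pos h0, Set.indicator_of_mem hz, hf]
        simp only [hprod, hsum]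
        ring
      · rw [hF, Set.indicator_of_notMem hin]
        by_cases h0 : 0 ≤ t
        · rw [if_pos h0, Set.indicator_of_notMem]
          intro hz
          exact hin (hmem.mpr ⟨h0, hz⟩)
        · rw [if_neg h0]
    -- transfer the integral
    have step1 : (∫ y in simplexSet (n+1) s, f y) = ∫ p, F (e.symm p) ∂ν := by
      rw [hF, ← MeasureTheory.integral_indicator (simplexSet_measurable _ _)]
      rw [show (volume : Measure (Fin (n+1) → ℝ)) = Measure.pi fun _ => volume from volume_pi]
      exact ((hmp.symm e).integral_comp e.symm.measurableEmbedding _).symm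
    have hGint : Integrable (fun p => F (e.symm p)) ν := by
      have : Integrable F (Measure.pi fun _ : Fin (n+1) => (volume : Measure ℝ)) := by
        rwa [← volume_pi]
      exact (MeasurePreserving.integrable_comp_emb (hmp.symm e) e.symm.measurableEmbedding).mpr this
    have step2 : (∫ p, F (e.symm p) ∂ν)
        = ∫ t, ∫ z, F (e.symm (t, z)) ∂(Measure.pi fun _ : Fin n => (volume : Measure ℝ)) := by
      exact integral_prod _ hGint
    have hinner : ∀ t : ℝ,
        (∫ z, F (e.symm (t, z)) ∂(Measure.pi fun _ : Fin n => (volume : Measure ℝ)))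
          = (Set.Icc (0:ℝ) s).indicator (fun t => C * (t ^ a 0 * (s - t) ^ M)) t := by
      intro t
      rw [show (Measure.pi fun _ : Fin n => (volume : Measure ℝ)) = volume from volume_pi.symm]
      by_cases h0 : 0 ≤ t
      · simp only [hcomp, if_pos h0]
        rw [MeasureTheory.integral_indicator (simplexSet_measurable _ _)]
        by_cases h1 : t ≤ s
        · rw [MeasureTheory.integral_const_mul, ih (fun j => a j.succ) b (s - t) (by linarith)]
          rw [Set.indicator_of_mem (Set.mem_Icc.mpr ⟨h0, h1⟩)]
          rw [hC, ← hA', ← hM]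
          field_simp
        · rw [simplexSet_empty n (by linarith), Measure.restrict_empty, integral_zero_measure,
            Set.indicator_of_notMem (by simp [Set.mem_Icc]; intro; linarith)]
      · simp only [hcomp, if_neg h0, MeasureTheory.integral_zero]
        rw [Set.indicator_of_notMem (by simp [Set.mem_Icc]; intro h; exact absurd h h0)]
    have step3 : (∫ t, (Set.Icc (0:ℝ) s).indicator (fun t => C * (t ^ a 0 * (s - t) ^ M)) t)
        = C * ∫ t in (0:ℝ)..s, t ^ a 0 * (s - t) ^ M := by
      rw [MeasureTheory.integral_indicator measurableSet_Icc, integral_Icc_eq_integral_Ioc,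
        ← intervalIntegral.integral_of_le hs, intervalIntegral.integral_const_mul]
    calc (∫ y in simplexSet (n+1) s, (∏ i, y i ^ a i) * (s - ∑ i, y i) ^ b)
        = ∫ p, F (e.symm p) ∂ν := step1
      _ = ∫ t, ∫ z, F (e.symm (t, z)) ∂(Measure.pi fun _ : Fin n => (volume : Measure ℝ)) :=
          step2
      _ = ∫ t, (Set.Icc (0:ℝ) s).indicator (fun t => C * (t ^ a 0 * (s - t) ^ M)) t := by
          simp only [hinner]
      _ = C * ∫ t in (0:ℝ)..s, t ^ a 0 * (s - t) ^ M := step3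
      _ = C * (s ^ (a 0 + M + 1) * ((a 0).factorial * M.factorial : ℝ)
            / (a 0 + M + 1).factorial) := by rw [beta_nat_scaled _ _ hs]
      _ = s ^ (n + 1 + ∑ i, a i + b) * ((∏ i, ((a i).factorial : ℝ)) * b.factorial)
            / ((n + 1 + ∑ i, a i + b).factorial) := by
          rw [Fin.sum_univ_succ, Fin.prod_univ_succ]
          have hidx : n + 1 + (a 0 + ∑ i : Fin n, a i.succ) + b = a 0 + M + 1 := by
            rw [hM, hA']; omega
          rw [hidx, hC]
          have h2 : ((a 0 + M + 1).factorial : ℝ) ≠ 0 := by positivity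
          field_simp



lemma choose_sum_range {i j N : ℕ} (hj : j < N) :
    ∑ k ∈ Finset.range N, i.choose k * j.choose k = (i + j).choose j := by
  rw [Nat.add_choose_eq, Finset.Nat.sum_antidiagonal_eq_sum_range_succ_mk]
  rw [← Finset.sum_subset (Finset.range_subset_range.mpr hj : Finset.range (j+1) ⊆ Finset.range N)]
  · exact Finset.sum_congr rfl fun k hk => by
      have := Finset.mem_range.mp hk
      rw [Nat.choose_symm (by omega : k ≤ j)]
  · intro k _ hk
    rw [Nat.choose_eq_zero_of_lt (by simp at hk ⊢; omega : j < k), Nat.mul_zero]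

lemma hankel_factorial_det (N : ℕ) :
    (Matrix.of fun i j : Fin N => ((((i:ℕ) + (j:ℕ)).factorial : ℝ))).det
      = ∏ k : Fin N, (((k:ℕ).factorial : ℝ)) ^ 2 := by
  set L : Matrix (Fin N) (Fin N) ℝ :=
    Matrix.of fun i k : Fin N => (((i:ℕ).factorial : ℝ)) * ((i:ℕ).choose (k:ℕ)) with hL
  have hfact : (Matrix.of fun i j : Fin N => ((((i:ℕ) + (j:ℕ)).factorial : ℝ)))
      = L * L.transpose := by
    ext i j
    rw [Matrix.mul_apply]
    simp only [hL, Matrix.transpose_apply, Matrix.of_apply]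
    have : ∑ k : Fin N, ((i:ℕ).factorial : ℝ) * ((i:ℕ).choose (k:ℕ))
        * (((j:ℕ).factorial : ℝ) * ((j:ℕ).choose (k:ℕ)))
        = ((i:ℕ).factorial : ℝ) * ((j:ℕ).factorial : ℝ)
          * ∑ k : Fin N, ((i:ℕ).choose (k:ℕ) : ℝ) * ((j:ℕ).choose (k:ℕ) : ℝ) := by
      rw [Finset.mul_sum]
      exact Finset.sum_congr rfl fun k _ => by ring
    rw [this]
    have hsum : ∑ k : Fin N, ((i:ℕ).choose (k:ℕ) : ℝ) * ((j:ℕ).choose (k:ℕ) : ℝ)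
        = (((i:ℕ) + (j:ℕ)).choose (j:ℕ) : ℝ) := by
      rw [Fin.sum_univ_eq_sum_range (fun k => ((i:ℕ).choose k : ℝ) * ((j:ℕ).choose k : ℝ))]
      rw [← choose_sum_range j.isLt]
      push_cast
      rfl
    rw [hsum]
    rw [show ((i:ℕ) + (j:ℕ)).factorial
        = ((i:ℕ) + (j:ℕ)).choose (j:ℕ) * (j:ℕ).factorial * (i:ℕ).factorial from ?_]
    · push_cast; ring
    · have := Nat.choose_mul_factorial_mul_factorial
        (show (j:ℕ) ≤ (i:ℕ) + (j:ℕ) from Nat.le_add_left _ _)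
      rw [← this, Nat.add_sub_cancel]
  have hLtri : L.BlockTriangular OrderDual.toDual := by
    intro i j hij
    have : (i:ℕ) < (j:ℕ) := hij
    simp [hL, Nat.choose_eq_zero_of_lt this]
  have hLdet : L.det = ∏ k : Fin N, (((k:ℕ).factorial : ℝ)) := by
    rw [Matrix.det_of_lowerTriangular L hLtri]
    exact Finset.prod_congr rfl fun k _ => by simp [hL]
  rw [hfact, Matrix.det_mul, Matrix.det_transpose, hLdet]
  rw [← Finset.prod_mul_distrib]
  exact Finset.prod_congr rfl fun k _ => (sq _).symm

lemma perm_double_sum (N : ℕ) :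
    ∑ σ : Equiv.Perm (Fin N), ∑ τ : Equiv.Perm (Fin N),
        ((Equiv.Perm.sign σ : ℤ) : ℝ) * ((Equiv.Perm.sign τ : ℤ) : ℝ)
          * ∏ i : Fin N, ((((σ i : ℕ) + (τ i : ℕ)).factorial : ℝ))
      = (N.factorial : ℝ) * (∏ k : Fin N, ((k:ℕ).factorial : ℝ)) ^ 2 := by
  have inner : ∀ σ : Equiv.Perm (Fin N),
      ∑ τ : Equiv.Perm (Fin N), ((Equiv.Perm.sign σ : ℤ) : ℝ) * ((Equiv.Perm.sign τ : ℤ) : ℝ)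
          * ∏ i : Fin N, ((((σ i : ℕ) + (τ i : ℕ)).factorial : ℝ))
        = ∑ π : Equiv.Perm (Fin N), ((Equiv.Perm.sign π : ℤ) : ℝ)
            * ∏ i : Fin N, ((((i : ℕ) + (π i : ℕ)).factorial : ℝ)) := by
    intro σ
    rw [← Equiv.sum_comp (Equiv.mulRight σ)
      (fun τ => ((Equiv.Perm.sign σ : ℤ) : ℝ) * ((Equiv.Perm.sign τ : ℤ) : ℝ)
          * ∏ i : Fin N, ((((σ i : ℕ) + (τ i : ℕ)).factorial : ℝ)))]
    refine Finset.sum_congr rfl fun π _ => ?_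
    have h1 : (Equiv.mulRight σ π) = π * σ := rfl
    rw [h1]
    have hsign : ((Equiv.Perm.sign σ : ℤ) : ℝ) * ((Equiv.Perm.sign (π * σ) : ℤ) : ℝ)
        = ((Equiv.Perm.sign π : ℤ) : ℝ) := by
      rw [Equiv.Perm.sign_mul]
      rcases Int.units_eq_one_or (Equiv.Perm.sign σ) with h | h <;>
        rcases Int.units_eq_one_or (Equiv.Perm.sign π) with h' | h' <;>
        simp [h, h']
    rw [hsign]
    congr 1
    calc ∏ i : Fin N, ((((σ i : ℕ) + ((π * σ) i : ℕ)).factorial : ℝ))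
        = ∏ i : Fin N, (fun x : Fin N => ((((x : ℕ) + (π x : ℕ)).factorial : ℝ))) (σ i) := by
          exact Finset.prod_congr rfl fun i _ => rfl
      _ = ∏ x : Fin N, ((((x : ℕ) + (π x : ℕ)).factorial : ℝ)) :=
          Equiv.prod_comp σ (fun x : Fin N => ((((x : ℕ) + (π x : ℕ)).factorial : ℝ)))
  rw [Finset.sum_congr rfl fun σ _ => inner σ, Finset.sum_const, Finset.card_univ]
  rw [Fintype.card_perm, Fintype.card_fin]
  rw [nsmul_eq_mul]
  congr 1
  rw [← Finset.prod_pow, ← hankel_factorial_det N, Matrix.det_apply']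
  refine Finset.sum_congr rfl fun π _ => ?_
  congr 1
  exact Finset.prod_congr rfl fun i _ => by rw [Matrix.of_apply, Nat.add_comm]

lemma xOf_castSucc {n : ℕ} (y : Fin n → ℝ) (i : Fin n) :
    xOf (N := n + 1) y i.castSucc = y i := by
  have h : ((i.castSucc : ℕ)) < n + 1 - 1 := i.isLt
  rw [xOf, dif_pos h]
  exact congrArg y (Fin.ext (Fin.coe_castSucc i))

lemma xOf_last {n : ℕ} (y : Fin n → ℝ) :
    xOf (N := n + 1) y (Fin.last n) = 1 - ∑ j, y j := by
  have h : ¬ ((Fin.last n : ℕ) < n + 1 - 1) := by rw [Fin.val_last]; omega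
  rw [xOf, dif_neg h]
  rfl

lemma xOf_continuous {n : ℕ} (i : Fin (n + 1)) :
    Continuous fun y : Fin n → ℝ => xOf (N := n + 1) y i := by
  by_cases h : (i : ℕ) < n + 1 - 1
  · simp only [xOf, dif_pos h]
    exact continuous_apply _
  · simp only [xOf, dif_neg h]
    exact continuous_const.sub (continuous_finset_sum _ fun j _ => continuous_apply j)

theorem integral_vandermonde_sq_over_simplex (N : ℕ) (hN : 1 ≤ N) :
    (∫ y in {y : Fin (N - 1) → ℝ | (∀ i, 0 ≤ y i) ∧ ∑ i, y i ≤ 1},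
        ∏ i : Fin N, ∏ j ∈ Finset.Ioi i, (xOf y i - xOf y j) ^ 2)
      = (N.factorial : ℝ) * (∏ k ∈ Finset.range N, (Nat.factorial k : ℝ)) ^ 2
          / (Nat.factorial (N ^ 2 - 1) : ℝ) := by
  obtain ⟨n, rfl⟩ : ∃ n, N = n + 1 := ⟨N - 1, (Nat.succ_pred_eq_of_pos hN).symm⟩
  clear hN
  show (∫ y in simplexSet n 1,
      ∏ i : Fin (n+1), ∏ j ∈ Finset.Ioi i, (xOf (N := n+1) y i - xOf (N := n+1) y j) ^ 2)
    = ((n+1).factorial : ℝ) * (∏ k ∈ Finset.range (n+1), (Nat.factorial k : ℝ)) ^ 2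
        / (Nat.factorial ((n+1) ^ 2 - 1) : ℝ)
  -- the pointwise expansion of the integrand
  set P := Equiv.Perm (Fin (n + 1)) with hP
  set F : P × P → (Fin n → ℝ) → ℝ := fun p y =>
    ((Equiv.Perm.sign p.1 : ℤ) : ℝ) * ((Equiv.Perm.sign p.2 : ℤ) : ℝ)
      * ∏ i : Fin (n + 1), xOf (N := n + 1) y i ^ ((p.1 i : ℕ) + (p.2 i : ℕ)) with hF
  have hpt : ∀ y : Fin n → ℝ,
      (∏ i : Fin (n + 1), ∏ j ∈ Finset.Ioi i, (xOf (N := n+1) y i - xOf (N := n+1) y j) ^ 2)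
        = ∑ p : P × P, F p y := by
    intro y
    set x : Fin (n + 1) → ℝ := xOf (N := n + 1) y with hx
    have h1 : (∏ i : Fin (n + 1), ∏ j ∈ Finset.Ioi i, (x i - x j) ^ 2)
        = (Matrix.vandermonde x).det ^ 2 := by
      rw [Matrix.det_vandermonde, ← Finset.prod_pow]
      refine Finset.prod_congr rfl fun i _ => ?_
      rw [← Finset.prod_pow]
      exact Finset.prod_congr rfl fun j _ => by ring
    have h2 : (Matrix.vandermonde x).det
        = ∑ σ : P, ((Equiv.Perm.sign σ : ℤ) : ℝ) * ∏ i : Fin (n + 1), x i ^ (σ i : ℕ) := by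
      rw [← Matrix.det_transpose, Matrix.det_apply']
      exact Finset.sum_congr rfl fun σ _ => by
        exact congrArg _ (Finset.prod_congr rfl fun i _ => rfl)
    rw [h1, h2, sq, Finset.sum_mul_sum, ← Fintype.sum_prod_type']
    refine Finset.sum_congr rfl fun p _ => ?_
    rw [hF]
    simp only [← hx]
    rw [show (∏ i : Fin (n+1), x i ^ ((p.1 i : ℕ) + (p.2 i : ℕ)))
        = (∏ i : Fin (n+1), x i ^ (p.1 i : ℕ)) * ∏ i : Fin (n+1), x i ^ (p.2 i : ℕ) from by
      rw [← Finset.prod_mul_distrib]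
      exact Finset.prod_congr rfl fun i _ => pow_add _ _ _]
    ring
  have hint : ∀ p : P × P, IntegrableOn (F p) (simplexSet n 1) := by
    intro p
    apply ContinuousOn.integrableOn_compact (simplexSet_isCompact n zero_le_one)
    apply Continuous.continuousOn
    exact continuous_const.mul
      (continuous_finset_prod _ fun i _ => (xOf_continuous i).pow _)
  have hswap : (∫ y in simplexSet n 1,
      ∏ i : Fin (n + 1), ∏ j ∈ Finset.Ioi i, (xOf (N := n+1) y i - xOf (N := n+1) y j) ^ 2)
      = ∑ p : P × P, ∫ y in simplexSet n 1, F p y := by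
    rw [show (fun y : Fin n → ℝ =>
        ∏ i : Fin (n + 1), ∏ j ∈ Finset.Ioi i, (xOf (N := n+1) y i - xOf (N := n+1) y j) ^ 2)
      = fun y => ∑ p : P × P, F p y from funext hpt]
    exact integral_finset_sum _ fun p _ => hint p
  rw [hswap]
  -- compute each term
  have hsum_perm : ∀ σ : P, ∑ i : Fin (n+1), (σ i : ℕ) = ∑ i : Fin (n+1), (i : ℕ) :=
    fun σ => Equiv.sum_comp σ (fun x => (x : ℕ))
  have hgauss : (∑ i : Fin (n+1), (i : ℕ)) * 2 = (n + 1) * n := by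
    rw [Fin.sum_univ_eq_sum_range (fun i => i), Finset.sum_range_id_mul_two]
    simp
  have hterm : ∀ p : P × P, (∫ y in simplexSet n 1, F p y)
      = ((Equiv.Perm.sign p.1 : ℤ) : ℝ) * ((Equiv.Perm.sign p.2 : ℤ) : ℝ)
        * (∏ i : Fin (n + 1), ((((p.1 i : ℕ) + (p.2 i : ℕ)).factorial : ℝ)))
        / (((n+1)^2 - 1).factorial : ℝ) := by
    intro p
    set e : Fin (n + 1) → ℕ := fun i => (p.1 i : ℕ) + (p.2 i : ℕ) with he
    have hsplit : ∀ y : Fin n → ℝ, (∏ i : Fin (n + 1), xOf (N := n + 1) y i ^ e i)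
        = (∏ i : Fin n, y i ^ e i.castSucc) * (1 - ∑ j, y j) ^ e (Fin.last n) := by
      intro y
      rw [Fin.prod_univ_castSucc]
      congr 1
      · exact Finset.prod_congr rfl fun i _ => by rw [xOf_castSucc]
      · rw [xOf_last]
    have : (∫ y in simplexSet n 1, F p y)
        = ((Equiv.Perm.sign p.1 : ℤ) : ℝ) * ((Equiv.Perm.sign p.2 : ℤ) : ℝ)
          * ∫ y in simplexSet n 1,
              (∏ i : Fin n, y i ^ e i.castSucc) * ((1:ℝ) - ∑ j, y j) ^ e (Fin.last n) := by
      rw [← MeasureTheory.integral_const_mul]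
      exact setIntegral_congr_fun (simplexSet_measurable n 1) fun y _ => by
        rw [hF]
        simp only
        rw [mul_assoc, hsplit y]
        ring
    rw [this, dirichlet n (fun i => e i.castSucc) (e (Fin.last n)) 1 zero_le_one, one_pow]
    have hidx : n + (∑ i : Fin n, e i.castSucc) + e (Fin.last n) = (n+1)^2 - 1 := by
      have h1 : (∑ i : Fin n, e i.castSucc) + e (Fin.last n) = ∑ i : Fin (n+1), e i := by
        rw [Fin.sum_univ_castSucc]
      have h2 : ∑ i : Fin (n+1), e i
          = (∑ i : Fin (n+1), (p.1 i : ℕ)) + (∑ i : Fin (n+1), (p.2 i : ℕ)) := by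
        rw [he, Finset.sum_add_distrib]
      have h3 := hsum_perm p.1
      have h4 := hsum_perm p.2
      have h5 : (n+1)^2 = n*n + 2*n + 1 := by ring
      have h6 : (n+1)*n = n*n + n := by ring
      omega
    have hprodfac : (∏ i : Fin n, (((e i.castSucc).factorial : ℝ)))
          * ((e (Fin.last n)).factorial : ℝ)
        = ∏ i : Fin (n+1), (((e i).factorial : ℝ)) := by
      rw [Fin.prod_univ_castSucc]
    rw [← Nat.add_assoc] at hidx ⊢
    rw [hidx, hprodfac, one_mul]
    ring
  rw [Finset.sum_congr rfl fun p _ => hterm p]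
  rw [← Finset.sum_div]
  rw [Fintype.sum_prod_type]
  have := perm_double_sum (n+1)
  rw [show ∑ σ : P, ∑ τ : P, ((Equiv.Perm.sign σ : ℤ) : ℝ) * ((Equiv.Perm.sign τ : ℤ) : ℝ)
      * (∏ i : Fin (n+1), (((σ i : ℕ) + (τ i : ℕ)).factorial : ℝ))
    = ((n+1).factorial : ℝ) * (∏ k : Fin (n+1), ((k:ℕ).factorial : ℝ)) ^ 2 from this]
  rw [Fin.prod_univ_eq_prod_range (fun k => (Nat.factorial k : ℝ))]
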